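/- arXiv:1011.0010 — 8 statements merged into one kernel-verified Lean document; each statement's English description precedes it below -/
import Mathlib

section
/- Let E be a finite-dimensional real inner product space and g_1, …, g_m ∈ E. A vector v ∈ E minimizes the function w ↦ max_{1≤i≤m} ⟨g_i, w⟩ + (1/2)‖w‖² over E if and only if there exist real numbers α_1, …, α_m ≥ 0 with Σ_{i=1}^m α_i = 1, α_i = 0 for every index i not in I(v) := {i : ⟨g_i, v⟩ = max_{1≤j≤m} ⟨g_j, v⟩}, and v = −Σ_{i=1}^m α_i g_i. -/
open scoped BigOperators

lemma sds_suff {E : Type*} [NormedAddCommGroup E] [InnerProductSpace ℝ E]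
    {m : ℕ} [Nonempty (Fin m)] (g : Fin m → E) (α : Fin m → ℝ) (u : E)
    (hα : ∀ i, 0 ≤ α i) (hsum : (∑ i, α i) = 1)
    (hact : ∀ i, (inner ℝ (g i) u : ℝ) ≠ (⨆ j, (inner ℝ (g j) u : ℝ)) → α i = 0)
    (hu : u = -∑ i, α i • g i) :
    ∀ w : E, (⨆ i, (inner ℝ (g i) u : ℝ)) + ‖u‖ ^ 2 / 2 ≤
      (⨆ i, (inner ℝ (g i) w : ℝ)) + ‖w‖ ^ 2 / 2 := by
  intro w
  have hle : ∀ (x : E) (i : Fin m), (inner ℝ (g i) x : ℝ) ≤ ⨆ j, (inner ℝ (g j) x : ℝ) :=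
    fun x i => le_ciSup (f := fun j => (inner ℝ (g j) x : ℝ)) (Set.Finite.bddAbove (Set.finite_range _)) i
  have hinner : ∀ x : E, (inner ℝ (∑ i, α i • g i) x : ℝ) = ∑ i, α i * inner ℝ (g i) x := by
    intro x; rw [sum_inner]; exact Finset.sum_congr rfl fun i _ => real_inner_smul_left _ _ _
  have hSu : ∑ i, α i * (inner ℝ (g i) u : ℝ) = ⨆ j, (inner ℝ (g j) u : ℝ) := by
    have h : ∀ i ∈ Finset.univ, α i * (inner ℝ (g i) u : ℝ)
        = α i * (⨆ j, (inner ℝ (g j) u : ℝ)) := by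
      intro i _
      by_cases h : (inner ℝ (g i) u : ℝ) = ⨆ j, (inner ℝ (g j) u : ℝ)
      · rw [h]
      · rw [hact i h]; ring
    rw [Finset.sum_congr rfl h, ← Finset.sum_mul, hsum, one_mul]
  have huu : (inner ℝ u u : ℝ) = -(⨆ j, (inner ℝ (g j) u : ℝ)) := by
    nth_rewrite 1 [hu]
    rw [inner_neg_left, hinner, hSu]
  have hSw : -(inner ℝ u w : ℝ) ≤ ⨆ j, (inner ℝ (g j) w : ℝ) := by
    have h1 : -(inner ℝ u w : ℝ) = ∑ i, α i * inner ℝ (g i) w := by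
      rw [hu, inner_neg_left, neg_neg, hinner]
    rw [h1]
    calc ∑ i, α i * (inner ℝ (g i) w : ℝ)
        ≤ ∑ i, α i * (⨆ j, (inner ℝ (g j) w : ℝ)) := by
          apply Finset.sum_le_sum
          intro i _
          exact mul_le_mul_of_nonneg_left (hle w i) (hα i)
      _ = ⨆ j, (inner ℝ (g j) w : ℝ) := by rw [← Finset.sum_mul, hsum, one_mul]
  have h2 : (inner ℝ u u : ℝ) = ‖u‖ ^ 2 := real_inner_self_eq_norm_sq u
  have h3 : ‖w - u‖ ^ 2 = ‖w‖ ^ 2 - 2 * inner ℝ w u + ‖u‖ ^ 2 := norm_sub_sq_real w u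
  have h4 : (0:ℝ) ≤ ‖w - u‖ ^ 2 := sq_nonneg _
  have h5 : (inner ℝ w u : ℝ) = inner ℝ u w := real_inner_comm u w
  nlinarith [hSw, huu]

lemma sds_exists {E : Type*} [NormedAddCommGroup E] [InnerProductSpace ℝ E]
    {m : ℕ} (hm : 0 < m) (g : Fin m → E) :
    ∃ α : Fin m → ℝ, (∀ i, 0 ≤ α i) ∧ (∑ i, α i) = 1 ∧
      ∀ i, α i ≠ 0 →
        (inner ℝ (g i) (-∑ j, α j • g j) : ℝ)
          = ⨆ j', (inner ℝ (g j') (-∑ j, α j • g j) : ℝ) := by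
  haveI : Nonempty (Fin m) := ⟨⟨0, hm⟩⟩
  -- minimize ‖∑ α i • g i‖ over the standard simplex
  have hΔne : (stdSimplex ℝ (Fin m)).Nonempty := by
    refine ⟨fun i => if i = ⟨0, hm⟩ then 1 else 0, ?_, ?_⟩
    · intro i; dsimp only; split <;> norm_num
    · simp
  have hF : Continuous (fun α : Fin m → ℝ => ‖∑ i, α i • g i‖) :=
    (continuous_finset_sum Finset.univ fun i _ =>
      (continuous_apply i).smul continuous_const).norm
  obtain ⟨α, hαΔ, hmin⟩ :=
    (isCompact_stdSimplex ℝ (Fin m)).exists_isMinOn hΔne hF.continuousOn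
  obtain ⟨hα, hsum⟩ := hαΔ
  set z : E := ∑ i, α i • g i with hz
  -- first-order condition: ⟪z, g j⟫ ≥ ‖z‖² for all j
  have key : ∀ j, (inner ℝ z z : ℝ) ≤ inner ℝ z (g j) := by
    intro j
    by_contra hcon
    push_neg at hcon
    set b : ℝ := inner ℝ z (g j) with hb
    set c : ℝ := inner ℝ z z - b with hc
    have hc0 : 0 < c := by simp only [hc]; linarith
    set d : ℝ := ‖g j - z‖ ^ 2 with hd
    have hd0 : 0 ≤ d := sq_nonneg _
    set t : ℝ := min 1 (c / (d + 1)) with ht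
    have ht0 : 0 < t := lt_min one_pos (div_pos hc0 (by linarith))
    have ht1 : t ≤ 1 := min_le_left _ _
    have htd : t * (d + 1) ≤ c := by
      have := min_le_right 1 (c / (d + 1))
      calc t * (d + 1) ≤ (c / (d + 1)) * (d + 1) := by nlinarith
        _ = c := by field_simp
    -- perturbed point
    set β : Fin m → ℝ := fun i => (1 - t) * α i + t * (if i = j then 1 else 0) with hβ
    have hβΔ : β ∈ stdSimplex ℝ (Fin m) := by
      refine ⟨fun i => ?_, ?_⟩
      · have := hα i
        show 0 ≤ (1 - t) * α i + t * (if i = j then 1 else 0)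
        split <;> nlinarith
      · simp only [hβ, Finset.sum_add_distrib, ← Finset.mul_sum, hsum]
        simp
    have hβg : ∑ i, β i • g i = (1 - t) • z + t • g j := by
      simp only [hβ, add_smul, Finset.sum_add_distrib, mul_smul]
      rw [← Finset.smul_sum, ← Finset.smul_sum, ← hz]
      congr 1
      congr 1
      simp [ite_smul]
    have hmin' : ‖z‖ ≤ ‖(1 - t) • z + t • g j‖ := by
      have := hmin hβΔ
      simpa [hβg] using this
    have hsq : ‖z‖ ^ 2 ≤ ‖(1 - t) • z + t • g j‖ ^ 2 := by
      have h0 : (0:ℝ) ≤ ‖z‖ := norm_nonneg _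
      nlinarith [norm_nonneg ((1 - t) • z + t • g j)]
    have hexp : ‖(1 - t) • z + t • g j‖ ^ 2
        = (1 - t) ^ 2 * inner ℝ z z + 2 * ((1 - t) * t) * b + t ^ 2 * inner ℝ (g j) (g j) := by
      rw [← real_inner_self_eq_norm_sq]
      simp only [inner_add_add_self, real_inner_smul_left, real_inner_smul_right, hb]
      rw [real_inner_comm (g j) z]
      ring
    have hzz : (inner ℝ z z : ℝ) = ‖z‖ ^ 2 := real_inner_self_eq_norm_sq z
    have hdd : d = inner ℝ (g j) (g j) - 2 * b + inner ℝ z z := by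
      rw [hd, ← real_inner_self_eq_norm_sq]
      simp only [inner_sub_sub_self, hb]
      rw [real_inner_comm (g j) z]
      ring
    nlinarith [mul_pos ht0 hc0, mul_le_mul_of_nonneg_left htd ht0.le]
  -- complementarity
  have hzsum : (inner ℝ z z : ℝ) = ∑ j, α j * inner ℝ z (g j) := by
    nth_rewrite 2 [hz]
    rw [inner_sum]
    exact Finset.sum_congr rfl fun i _ => real_inner_smul_right _ _ _
  have hcompl : ∀ j, α j ≠ 0 → (inner ℝ z (g j) : ℝ) = inner ℝ z z := by
    have hterm : ∀ j ∈ Finset.univ, (0:ℝ) ≤ α j * (inner ℝ z (g j) - inner ℝ z z) :=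
      fun j _ => mul_nonneg (hα j) (by linarith [key j])
    have hzero : ∑ j, α j * ((inner ℝ z (g j) : ℝ) - inner ℝ z z) = 0 := by
      have : ∑ j, α j * ((inner ℝ z (g j) : ℝ) - inner ℝ z z)
          = (∑ j, α j * inner ℝ z (g j)) - (∑ j, α j) * inner ℝ z z := by
        rw [Finset.sum_mul]
        rw [← Finset.sum_sub_distrib]
        exact Finset.sum_congr rfl fun i _ => by ring
      rw [this, hsum, one_mul, ← hzsum]; ring
    intro j hj
    have := (Finset.sum_eq_zero_iff_of_nonneg hterm).mp hzero j (Finset.mem_univ j)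
    rcases mul_eq_zero.mp this with h | h
    · exact absurd h hj
    · linarith
  -- existence of an active index
  obtain ⟨j0, hj0⟩ : ∃ j, α j ≠ 0 := by
    by_contra hno
    push_neg at hno
    rw [Finset.sum_eq_zero (fun i _ => hno i)] at hsum
    norm_num at hsum
  -- compute the sup
  have hinneg : ∀ i, (inner ℝ (g i) (-z) : ℝ) = -(inner ℝ z (g i)) := fun i => by
    rw [inner_neg_right, real_inner_comm]
  have hsupval : (⨆ j', (inner ℝ (g j') (-z) : ℝ)) = -(inner ℝ z z : ℝ) := by
    apply le_antisymm
    · apply ciSup_le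
      intro i
      rw [hinneg i]
      linarith [key i]
    · have hj0' := hcompl j0 hj0
      have := le_ciSup (f := fun j' => (inner ℝ (g j') (-z) : ℝ))
        (Set.Finite.bddAbove (Set.finite_range _)) j0
      rw [hinneg j0, hj0'] at this
      exact this
  refine ⟨α, hα, hsum, fun i hi => ?_⟩
  rw [← hz, hsupval, hinneg i, hcompl i hi]


/-- Lemma 3 (second assertion): `v` minimizes
`w ↦ max_{1≤i≤m} ⟨g_i, w⟩ + (1/2)‖w‖²` over `E` if and only if there are
nonnegative coefficients `α_i` summing to `1`, vanishing outside the active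
index set `I(v) = {i : ⟨g_i, v⟩ = max_j ⟨g_j, v⟩}`, with `v = -∑ α_i g_i`. -/
theorem steepest_descent_subproblem_characterization
    {E : Type*} [NormedAddCommGroup E] [InnerProductSpace ℝ E]
    [FiniteDimensional ℝ E] {m : ℕ} (hm : 0 < m) (g : Fin m → E) (v : E) :
    (∀ w : E,
        (⨆ i, (inner ℝ (g i) v : ℝ)) + ‖v‖ ^ 2 / 2 ≤
          (⨆ i, (inner ℝ (g i) w : ℝ)) + ‖w‖ ^ 2 / 2) ↔
      ∃ α : Fin m → ℝ, (∀ i, 0 ≤ α i) ∧ (∑ i, α i) = 1 ∧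
        (∀ i, (inner ℝ (g i) v : ℝ) ≠ (⨆ j, (inner ℝ (g j) v : ℝ)) → α i = 0) ∧
        v = -∑ i, α i • g i := by
  haveI : Nonempty (Fin m) := ⟨⟨0, hm⟩⟩
  constructor
  · intro hminv
    obtain ⟨α, hα, hsum, hactive⟩ := sds_exists hm g
    set u : E := -∑ i, α i • g i with hu
    have hact' : ∀ i, (inner ℝ (g i) u : ℝ) ≠ ⨆ j, (inner ℝ (g j) u : ℝ) → α i = 0 := by
      intro i h
      by_contra h0
      exact h (hactive i h0)
    have hminu := sds_suff g α u hα hsum hact' hu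
    have h1 := hminv u
    have h2 := hminu v
    -- midpoint argument to show v = u
    set w : E := (2:ℝ)⁻¹ • (v + u) with hw
    have hsupw : (⨆ i, (inner ℝ (g i) w : ℝ))
        ≤ ((⨆ i, (inner ℝ (g i) v : ℝ)) + (⨆ i, (inner ℝ (g i) u : ℝ))) / 2 := by
      apply ciSup_le
      intro i
      have hwi : (inner ℝ (g i) w : ℝ) = (inner ℝ (g i) v + inner ℝ (g i) u) / 2 := by
        rw [hw, inner_smul_right, inner_add_right]; ring
      have hv' := le_ciSup (f := fun j => (inner ℝ (g j) v : ℝ))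
        (Set.Finite.bddAbove (Set.finite_range _)) i
      have hu' := le_ciSup (f := fun j => (inner ℝ (g j) u : ℝ))
        (Set.Finite.bddAbove (Set.finite_range _)) i
      rw [hwi]
      beta_reduce at hv' hu'
      linarith
    have hnormw : ‖w‖ ^ 2 = (‖v‖ ^ 2 + ‖u‖ ^ 2) / 2 - ‖v - u‖ ^ 2 / 4 := by
      have e1 : ‖v + u‖ ^ 2 = ‖v‖ ^ 2 + 2 * inner ℝ v u + ‖u‖ ^ 2 := norm_add_sq_real v u
      have e2 : ‖v - u‖ ^ 2 = ‖v‖ ^ 2 - 2 * inner ℝ v u + ‖u‖ ^ 2 := norm_sub_sq_real v u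
      have e3 : ‖w‖ ^ 2 = ‖v + u‖ ^ 2 / 4 := by
        rw [hw, norm_smul]
        simp [Real.norm_eq_abs]
        ring
      rw [e3, e1, e2]; ring
    have h3 := hminv w
    have hvu : v = u := by
      have hsq : ‖v - u‖ ^ 2 ≤ 0 := by nlinarith
      have : ‖v - u‖ = 0 := by
        have := sq_nonneg ‖v - u‖
        have h0 : ‖v - u‖ ^ 2 = 0 := le_antisymm hsq this
        exact pow_eq_zero_iff (by norm_num) |>.mp h0
      have : v - u = 0 := norm_eq_zero.mp this
      exact sub_eq_zero.mp this
    exact ⟨α, hα, hsum, by rw [hvu]; exact hact', by rw [hvu]⟩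
  · rintro ⟨α, hα, hsum, hact, hv⟩
    exact sds_suff g α v hα hsum hact hv
end

section
/- Let E be a finite-dimensional real inner product space and g_1, …, g_m ∈ E. If there exists v̂ ∈ E with ⟨g_i, v̂⟩ < 0 for all i = 1, …, m, then the unique minimizer v of w ↦ max_{1≤i≤m} ⟨g_i, w⟩ + (1/2)‖w‖² satisfies max_{1≤i≤m} ⟨g_i, v⟩ + (1/2)‖v‖² < 0; in particular ⟨g_i, v⟩ < 0 for all i. -/
/-- Lemma 4: if some `v̂` satisfies `⟨g_i, v̂⟩ < 0` for all `i` (the point is not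
Pareto critical), then the unique minimizer `v` of
`w ↦ max_{1≤i≤m} ⟨g_i, w⟩ + (1/2)‖w‖²` has negative optimal value; in
particular `v` is a descent direction. -/
theorem steepest_descent_direction_descent
    {E : Type*} [NormedAddCommGroup E] [InnerProductSpace ℝ E]
    [FiniteDimensional ℝ E] {m : ℕ} (hm : 0 < m) (g : Fin m → E)
    (vhat : E) (hvhat : ∀ i, (inner ℝ (g i) vhat : ℝ) < 0) (v : E)
    (hv : ∀ w : E,
      (⨆ i, (inner ℝ (g i) v : ℝ)) + ‖v‖ ^ 2 / 2 ≤
        (⨆ i, (inner ℝ (g i) w : ℝ)) + ‖w‖ ^ 2 / 2) :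
    (⨆ i, (inner ℝ (g i) v : ℝ)) + ‖v‖ ^ 2 / 2 < 0 ∧
      ∀ i, (inner ℝ (g i) v : ℝ) < 0 := by
  haveI : Nonempty (Fin m) := ⟨⟨0, hm⟩⟩
  set M : ℝ := ⨆ i, (inner ℝ (g i) vhat : ℝ) with hM
  obtain ⟨j, hj⟩ := Finite.exists_max (fun i => (inner ℝ (g i) vhat : ℝ))
  have hMle : M ≤ (inner ℝ (g j) vhat : ℝ) := ciSup_le hj
  have hMneg : M < 0 := lt_of_le_of_lt hMle (hvhat j)
  set t : ℝ := -M / (‖vhat‖ ^ 2 + 1) with ht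
  have hden : (0:ℝ) < ‖vhat‖ ^ 2 + 1 := by positivity
  have htpos : 0 < t := div_pos (by linarith) hden
  -- bound the sup at w = t • vhat
  have hsup_le : (⨆ i, (inner ℝ (g i) (t • vhat) : ℝ)) ≤ t * M := by
    apply ciSup_le
    intro i
    rw [real_inner_smul_right]
    have hle : (inner ℝ (g i) vhat : ℝ) ≤ M := by
      exact le_ciSup (f := fun i => (inner ℝ (g i) vhat : ℝ)) (Set.Finite.bddAbove (Set.finite_range _)) i
    exact mul_le_mul_of_nonneg_left hle htpos.le
  have hnorm : ‖t • vhat‖ ^ 2 = t ^ 2 * ‖vhat‖ ^ 2 := by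
    rw [norm_smul, mul_pow, Real.norm_eq_abs, sq_abs]
  have hval : (⨆ i, (inner ℝ (g i) (t • vhat) : ℝ)) + ‖t • vhat‖ ^ 2 / 2 < 0 := by
    rw [hnorm]
    have : t * M + t ^ 2 * ‖vhat‖ ^ 2 / 2 < 0 := by
      have ht2 : t * ‖vhat‖ ^ 2 ≤ -M := by
        rw [ht]
        rw [div_mul_eq_mul_div, div_le_iff₀ hden]
        nlinarith
      nlinarith
    linarith
  have hvneg : (⨆ i, (inner ℝ (g i) v : ℝ)) + ‖v‖ ^ 2 / 2 < 0 :=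
    lt_of_le_of_lt (hv (t • vhat)) hval
  refine ⟨hvneg, fun i => ?_⟩
  have hle : (inner ℝ (g i) v : ℝ) ≤ ⨆ i, (inner ℝ (g i) v : ℝ) :=
    le_ciSup (f := fun i => (inner ℝ (g i) v : ℝ)) (Set.Finite.bddAbove (Set.finite_range _)) i
  have : (0:ℝ) ≤ ‖v‖ ^ 2 / 2 := by positivity
  linarith
end

section
/- Let F = (f_1, …, f_m) : ℝⁿ → ℝᵐ be continuously differentiable. Then the steepest descent direction map ℝⁿ ∋ p ↦ v(p), where v(p) is the unique minimizer over ℝⁿ of v ↦ max_{1≤i≤m} ⟨∇f_i(p), v⟩ + (1/2)‖v‖², is continuous. -/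
private lemma sdm_sup_le {n m : ℕ} (hm : 0 < m) (g h : Fin m → EuclideanSpace ℝ (Fin n))
    (v : EuclideanSpace ℝ (Fin n)) :
    (⨆ i, (inner ℝ (g i) v : ℝ)) ≤
      (⨆ i, (inner ℝ (h i) v : ℝ)) + (∑ i, ‖g i - h i‖) * ‖v‖ := by
  have : Nonempty (Fin m) := ⟨⟨0, hm⟩⟩
  apply ciSup_le
  intro i
  have h1 : (inner ℝ (g i) v : ℝ) = inner ℝ (h i) v + inner ℝ (g i - h i) v := by
    rw [inner_sub_left]; ring
  rw [h1]
  have h2 : (inner ℝ (h i) v : ℝ) ≤ ⨆ j, (inner ℝ (h j) v : ℝ) :=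
    le_ciSup (f := fun j => (inner ℝ (h j) v : ℝ))
      (Set.Finite.bddAbove (Set.finite_range _)) i
  have h3 : (inner ℝ (g i - h i) v : ℝ) ≤ (∑ j, ‖g j - h j‖) * ‖v‖ := by
    calc (inner ℝ (g i - h i) v : ℝ) ≤ ‖g i - h i‖ * ‖v‖ := real_inner_le_norm _ _
      _ ≤ (∑ j, ‖g j - h j‖) * ‖v‖ := by
          apply mul_le_mul_of_nonneg_right _ (norm_nonneg v)
          exact Finset.single_le_sum (f := fun j => ‖g j - h j‖) (fun j _ => norm_nonneg _) (Finset.mem_univ i)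
  linarith

/-- Strong convexity growth at the minimizer. -/
private lemma sdm_strong {n m : ℕ} (hm : 0 < m) (g : Fin m → EuclideanSpace ℝ (Fin n))
    (x : EuclideanSpace ℝ (Fin n))
    (hmin : ∀ w, (⨆ i, (inner ℝ (g i) x : ℝ)) + ‖x‖ ^ 2 / 2 ≤
      (⨆ i, (inner ℝ (g i) w : ℝ)) + ‖w‖ ^ 2 / 2)
    (w : EuclideanSpace ℝ (Fin n)) :
    (⨆ i, (inner ℝ (g i) x : ℝ)) + ‖x‖ ^ 2 / 2 + ‖w - x‖ ^ 2 / 4 ≤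
      (⨆ i, (inner ℝ (g i) w : ℝ)) + ‖w‖ ^ 2 / 2 := by
  have : Nonempty (Fin m) := ⟨⟨0, hm⟩⟩
  set mid : EuclideanSpace ℝ (Fin n) := (1/2 : ℝ) • (x + w) with hmid
  have hSmid : (⨆ i, (inner ℝ (g i) mid : ℝ)) ≤
      ((⨆ i, (inner ℝ (g i) x : ℝ)) + (⨆ i, (inner ℝ (g i) w : ℝ))) / 2 := by
    apply ciSup_le
    intro i
    have heq : (inner ℝ (g i) mid : ℝ) = (inner ℝ (g i) x + inner ℝ (g i) w) / 2 := by
      rw [hmid, inner_smul_right, inner_add_right]; ring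
    rw [heq]
    have hx : (inner ℝ (g i) x : ℝ) ≤ ⨆ j, (inner ℝ (g j) x : ℝ) :=
      le_ciSup (f := fun j => (inner ℝ (g j) x : ℝ))
        (Set.Finite.bddAbove (Set.finite_range _)) i
    have hw : (inner ℝ (g i) w : ℝ) ≤ ⨆ j, (inner ℝ (g j) w : ℝ) :=
      le_ciSup (f := fun j => (inner ℝ (g j) w : ℝ))
        (Set.Finite.bddAbove (Set.finite_range _)) i
    linarith
  have hpar : ‖x + w‖ ^ 2 = 2 * ‖x‖ ^ 2 + 2 * ‖w‖ ^ 2 - ‖w - x‖ ^ 2 := by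
    have hpl := parallelogram_law_with_norm ℝ x w
    have hrev : ‖x - w‖ = ‖w - x‖ := norm_sub_rev x w
    rw [hrev] at hpl
    linarith
  have hnmid : ‖mid‖ ^ 2 = ‖x + w‖ ^ 2 / 4 := by
    rw [hmid, norm_smul, mul_pow, Real.norm_eq_abs,
      abs_of_nonneg (by norm_num : (0:ℝ) ≤ 1/2)]
    ring
  have hφ := hmin mid
  rw [hnmid, hpar] at hφ
  linarith

/-- Lemma 9 (Euclidean case): for a continuously differentiable
`F = (f_1, …, f_m) : ℝⁿ → ℝᵐ`, the steepest descent direction map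
`p ↦ v(p) := argmin_v (max_i ⟨∇f_i(p), v⟩ + (1/2)‖v‖²)` is continuous. -/
theorem steepest_descent_direction_map_continuous
    {n m : ℕ} (hm : 0 < m) (f : Fin m → EuclideanSpace ℝ (Fin n) → ℝ)
    (hf : ∀ i, ContDiff ℝ 1 (f i))
    (sd : EuclideanSpace ℝ (Fin n) → EuclideanSpace ℝ (Fin n))
    (hsd : ∀ p w,
      (⨆ i, (inner ℝ (gradient (f i) p) (sd p) : ℝ)) + ‖sd p‖ ^ 2 / 2 ≤
        (⨆ i, (inner ℝ (gradient (f i) p) w : ℝ)) + ‖w‖ ^ 2 / 2) :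
    Continuous sd := by
  have : Nonempty (Fin m) := ⟨⟨0, hm⟩⟩
  set G : Fin m → EuclideanSpace ℝ (Fin n) → EuclideanSpace ℝ (Fin n) :=
    fun i => gradient (f i) with hG
  -- gradients are continuous
  have hGc : ∀ i, Continuous (G i) := by
    intro i
    have h1 : Continuous (fderiv ℝ (f i)) := (hf i).continuous_fderiv one_ne_zero
    exact ((InnerProductSpace.toDual ℝ
      (EuclideanSpace ℝ (Fin n))).symm.continuous.comp h1 : _)
  -- N q = sum of gradient norms, continuous
  set N : EuclideanSpace ℝ (Fin n) → ℝ := fun q => ∑ i, ‖G i q‖ with hN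
  have hNc : Continuous N := continuous_finset_sum _ (fun i _ => (hGc i).norm)
  have hNnn : ∀ q, 0 ≤ N q := fun q => Finset.sum_nonneg (fun i _ => norm_nonneg _)
  -- bound on the minimizer
  have hbd : ∀ q, ‖sd q‖ ≤ 2 * N q := by
    intro q
    have h0 := hsd q 0
    have hz : (⨆ i, (inner ℝ (G i q) (0 : EuclideanSpace ℝ (Fin n)) : ℝ)) = 0 := by
      simp
    rw [hz] at h0
    simp only [norm_zero] at h0
    have hlow : -(N q) * ‖sd q‖ ≤ ⨆ i, (inner ℝ (G i q) (sd q) : ℝ) := by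
      have hi : (inner ℝ (G ⟨0, hm⟩ q) (sd q) : ℝ) ≤ ⨆ i, (inner ℝ (G i q) (sd q) : ℝ) :=
        le_ciSup (f := fun i => (inner ℝ (G i q) (sd q) : ℝ))
          (Set.Finite.bddAbove (Set.finite_range _)) ⟨0, hm⟩
      have h2 : -(‖G ⟨0, hm⟩ q‖ * ‖sd q‖) ≤ (inner ℝ (G ⟨0, hm⟩ q) (sd q) : ℝ) := by
        have ha := abs_real_inner_le_norm (G ⟨0, hm⟩ q) (sd q)
        have hb := neg_abs_le (inner ℝ (G ⟨0, hm⟩ q) (sd q) : ℝ)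
        linarith
      have h3 : ‖G ⟨0, hm⟩ q‖ ≤ N q :=
        Finset.single_le_sum (f := fun j => ‖G j q‖) (fun j _ => norm_nonneg _) (Finset.mem_univ _)
      nlinarith [norm_nonneg (sd q)]
    nlinarith [norm_nonneg (sd q), hNnn q]
  -- main stability estimate
  have hstab : ∀ p q : EuclideanSpace ℝ (Fin n), ‖sd q - sd p‖ ^ 2 ≤
      4 * (∑ i, ‖G i p - G i q‖) * (2 * N p + 2 * N q) := by
    intro p q
    set ε := ∑ i, ‖G i p - G i q‖ with hε
    have hεnn : 0 ≤ ε := Finset.sum_nonneg (fun i _ => norm_nonneg _)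
    have hε' : (∑ i, ‖G i q - G i p‖) = ε := by
      rw [hε]
      exact Finset.sum_congr rfl (fun i _ => norm_sub_rev _ _)
    have h1 := sdm_strong hm (fun i => G i p) (sd p) (hsd p) (sd q)
    have h2 := sdm_sup_le hm (fun i => G i p) (fun i => G i q) (sd q)
    have h3 := hsd q (sd p)
    have h4 := sdm_sup_le hm (fun i => G i q) (fun i => G i p) (sd p)
    rw [hε'] at h4
    have hbp := hbd p
    have hbq := hbd q
    nlinarith [norm_nonneg (sd p), norm_nonneg (sd q), hNnn p, hNnn q]
  -- conclude continuity
  rw [continuous_iff_continuousAt]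
  intro p
  rw [ContinuousAt, tendsto_iff_norm_sub_tendsto_zero]
  set B : EuclideanSpace ℝ (Fin n) → ℝ :=
    fun q => 4 * (∑ i, ‖G i p - G i q‖) * (2 * N p + 2 * N q) with hB
  have hBc : Continuous B := by
    apply Continuous.mul
    · exact continuous_const.mul
        (continuous_finset_sum _ (fun i _ => (continuous_const.sub (hGc i)).norm))
    · exact continuous_const.add (continuous_const.mul hNc)
  have hBp : B p = 0 := by simp [hB]
  have hle : ∀ q, ‖sd q - sd p‖ ≤ Real.sqrt (B q) := by
    intro q
    have h1 : ‖sd q - sd p‖ ^ 2 ≤ B q := hstab p q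
    have h2 := Real.sqrt_le_sqrt h1
    rwa [Real.sqrt_sq (norm_nonneg _)] at h2
  have hsq : Filter.Tendsto (fun q => Real.sqrt (B q)) (nhds p) (nhds 0) := by
    have hT : Filter.Tendsto B (nhds p) (nhds 0) := by
      rw [← hBp]; exact hBc.continuousAt
    simpa [Function.comp_def] using Real.continuous_sqrt.continuousAt.tendsto.comp hT
  exact squeeze_zero (fun q => norm_nonneg _) hle hsq
end

section
/- Let H = (h_1, …, h_m) : ℝⁿ → ℝᵐ be convex and continuously differentiable. Then a point p ∈ ℝⁿ is Pareto critical for H (i.e., there is no v ∈ ℝⁿ with ⟨∇h_i(p), v⟩ < 0 for all i = 1, …, m) if and only if p is a weak Pareto optimal point of H (i.e., there is no q ∈ ℝⁿ with h_i(q) < h_i(p) for all i = 1, …, m). -/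
open Filter Topology

-- auxiliary: the line map t ↦ p + t • v, derivative, convexity
lemma line_hasDerivAt {E : Type*} [NormedAddCommGroup E] [NormedSpace ℝ E]
    (p v : E) (t : ℝ) : HasDerivAt (fun t : ℝ => p + t • v) v t := by
  simpa using ((hasDerivAt_id t).smul_const v).const_add p

lemma comp_line_hasDerivAt {E : Type*} [NormedAddCommGroup E] [InnerProductSpace ℝ E]
    [CompleteSpace E] {f : E → ℝ} (hd : Differentiable ℝ f) (p v : E) (t : ℝ) :
    HasDerivAt (fun t : ℝ => f (p + t • v)) (inner ℝ (gradient f (p + t • v)) v) t := by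
  have h1 : HasGradientAt f (gradient f (p + t • v)) (p + t • v) :=
    (hd _).hasGradientAt
  have h2 := h1.hasFDerivAt.comp_hasDerivAt t (line_hasDerivAt p v t)
  simpa [Function.comp_def] using h2

lemma comp_line_convexOn {E : Type*} [NormedAddCommGroup E] [NormedSpace ℝ E]
    {f : E → ℝ} (hc : ConvexOn ℝ Set.univ f) (p v : E) :
    ConvexOn ℝ Set.univ (fun t : ℝ => f (p + t • v)) := by
  have := hc.comp_affineMap (AffineMap.lineMap p (p + v) : ℝ →ᵃ[ℝ] E)
  simp only [Set.preimage_univ] at this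
  have he : (fun t : ℝ => f (p + t • v)) = f ∘ (AffineMap.lineMap p (p + v)) := by
    funext t
    simp [AffineMap.lineMap_apply, add_sub_cancel_left, add_comm]
  rw [he]
  exact this

/-- Proposition 16 (Euclidean case): for a convex continuously differentiable
`H = (h_1, …, h_m) : ℝⁿ → ℝᵐ`, a point `p` is Pareto critical (no `v` with
`⟨∇h_i(p), v⟩ < 0` for all `i`) if and only if `p` is weak Pareto optimal
(no `q` with `h_i(q) < h_i(p)` for all `i`). -/
theorem convex_pareto_critical_iff_weak_pareto_optimal
    {n m : ℕ} (h : Fin m → EuclideanSpace ℝ (Fin n) → ℝ)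
    (hf : ∀ i, ContDiff ℝ 1 (h i))
    (hconv : ∀ i, ConvexOn ℝ Set.univ (h i))
    (p : EuclideanSpace ℝ (Fin n)) :
    (¬ ∃ v : EuclideanSpace ℝ (Fin n),
        ∀ i, (inner ℝ (gradient (h i) p) v : ℝ) < 0) ↔
      ¬ ∃ q : EuclideanSpace ℝ (Fin n), ∀ i, h i q < h i p := by
  constructor
  · -- Pareto critical → weak Pareto optimal
    intro hcrit ⟨q, hq⟩
    apply hcrit
    refine ⟨q - p, fun i => ?_⟩
    have hd := comp_line_hasDerivAt ((hf i).differentiable one_ne_zero) p (q - p) 0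
    rw [show p + (0 : ℝ) • (q - p) = p by simp] at hd
    have hcv := comp_line_convexOn (hconv i) p (q - p)
    have hle := hcv.le_slope_of_hasDerivAt (Set.mem_univ 0) (Set.mem_univ 1)
      one_pos hd
    have hs : slope (fun t : ℝ => h i (p + t • (q - p))) 0 1 = h i q - h i p := by
      simp [slope_def_field]
    rw [hs] at hle
    exact lt_of_le_of_lt hle (by linarith [hq i])
  · -- weak Pareto optimal → Pareto critical
    intro hopt ⟨v, hv⟩
    apply hopt
    -- for each i, slope → derivative < 0, so eventually (t → 0+) h i (p + t•v) < h i p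
    have hev : ∀ᶠ t in 𝓝[>] (0 : ℝ), ∀ i, h i (p + t • v) < h i p := by
      rw [eventually_all]
      intro i
      have hd := comp_line_hasDerivAt ((hf i).differentiable one_ne_zero) p v 0
      rw [show p + (0 : ℝ) • v = p by simp] at hd
      have hslope := hasDerivAt_iff_tendsto_slope.mp hd
      have hneg : ∀ᶠ t in 𝓝[≠] (0 : ℝ),
          slope (fun t : ℝ => h i (p + t • v)) 0 t < 0 :=
        hslope.eventually_lt_const (hv i)
      have hmono : 𝓝[>] (0 : ℝ) ≤ 𝓝[≠] (0 : ℝ) :=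
        nhdsWithin_mono 0 (fun t ht => ne_of_gt ht)
      filter_upwards [hmono hneg, self_mem_nhdsWithin] with t hts ht
      have ht' : (0 : ℝ) < t := ht
      rw [slope_def_field] at hts
      have hts' : t⁻¹ * (h i (p + t • v) - h i p) < 0 := by
        simpa [div_eq_inv_mul] using hts
      nlinarith [inv_pos.mpr ht']
    obtain ⟨t, ht⟩ := hev.exists
    exact ⟨p + t • v, ht⟩
end

section
/- Let (X, d) be a metric space, U ⊆ X a nonempty set, and (q^k) a sequence in X that is quasi-Fejér convergent to U. If some accumulation point q̄ of (q^k) belongs to U, then the whole sequence (q^k) converges to q̄. -/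
open Filter

/-- Lemma 18 (second assertion): if a sequence is quasi-Fejér convergent to a
nonempty set `U` and some accumulation point `q̄` of the sequence belongs to
`U`, then the whole sequence converges to `q̄`. -/
theorem quasiFejer_accumulation_in_U_implies_convergence
    {X : Type*} [MetricSpace X] (U : Set X) (hU : U.Nonempty) (q : ℕ → X)
    (hqF : ∀ u ∈ U, ∃ ε : ℕ → ℝ, (∀ k, 0 ≤ ε k) ∧ Summable ε ∧
      ∀ k, dist (q (k + 1)) u ^ 2 ≤ dist (q k) u ^ 2 + ε k)
    (qbar : X) (hqbarU : qbar ∈ U)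
    (hacc : ∃ σ : ℕ → ℕ, StrictMono σ ∧ Tendsto (q ∘ σ) atTop (nhds qbar)) :
    Tendsto q atTop (nhds qbar) := by
  obtain ⟨ε, hε0, hεs, hεineq⟩ := hqF qbar hqbarU
  obtain ⟨σ, hσmono, hσtend⟩ := hacc
  set a : ℕ → ℝ := fun k => dist (q k) qbar ^ 2 with ha
  set T : ℕ → ℝ := fun k => ∑' j, ε (j + k) with hT
  have hT0 : ∀ k, 0 ≤ T k := fun k => tsum_nonneg (fun j => hε0 _)
  have hTrec : ∀ k, T k = ε k + T (k + 1) := by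
    intro k
    have hs : Summable (fun j => ε (j + k)) := by
      exact (summable_nat_add_iff k).2 hεs
    have := Summable.tsum_eq_zero_add hs
    simp only [zero_add] at this
    rw [hT]
    simp only
    rw [this]
    congr 1
    apply tsum_congr
    intro j
    congr 1
    omega
  set b : ℕ → ℝ := fun k => a k + T k with hb
  have hbanti : Antitone b := by
    apply antitone_nat_of_succ_le
    intro k
    have := hεineq k
    have := hTrec k
    simp only [hb, ha]
    nlinarith [hεineq k, hTrec k]
  have hb0 : ∀ k, 0 ≤ b k := fun k => add_nonneg (sq_nonneg _) (hT0 k)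
  -- b converges to its infimum
  have hbdd : BddBelow (Set.range b) := ⟨0, by rintro x ⟨k, rfl⟩; exact hb0 k⟩
  have hbtend : Tendsto b atTop (nhds (⨅ k, b k)) :=
    tendsto_atTop_ciInf hbanti hbdd
  -- subsequence of b tends to 0
  have haσ : Tendsto (fun n => a (σ n)) atTop (nhds 0) := by
    have hd : Tendsto (fun n => dist (q (σ n)) qbar) atTop (nhds 0) :=
      tendsto_iff_dist_tendsto_zero.mp hσtend
    have := hd.pow 2
    simpa using this
  have hTtend : Tendsto T atTop (nhds 0) := tendsto_sum_nat_add ε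
  have hTσ : Tendsto (fun n => T (σ n)) atTop (nhds 0) :=
    hTtend.comp hσmono.tendsto_atTop
  have hbσ : Tendsto (fun n => b (σ n)) atTop (nhds 0) := by
    have := haσ.add hTσ
    simpa using this
  have hbσ' : Tendsto (fun n => b (σ n)) atTop (nhds (⨅ k, b k)) :=
    hbtend.comp hσmono.tendsto_atTop
  have hinf : (⨅ k, b k) = 0 := tendsto_nhds_unique hbσ' hbσ
  rw [hinf] at hbtend
  -- squeeze: 0 ≤ a k ≤ b k
  have hatend : Tendsto a atTop (nhds 0) := by
    apply squeeze_zero (fun k => sq_nonneg _) (fun k => ?_) hbtend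
    exact le_add_of_nonneg_right (hT0 k)
  have hdtend : Tendsto (fun k => dist (q k) qbar) atTop (nhds 0) := by
    have hsqrt : Tendsto (fun k => Real.sqrt (a k)) atTop (nhds (Real.sqrt 0)) :=
      (Real.continuous_sqrt.tendsto 0).comp hatend
    simp only [Real.sqrt_zero] at hsqrt
    convert hsqrt using 2 with k
    rw [ha]
    simp [Real.sqrt_sq dist_nonneg]
  exact tendsto_iff_dist_tendsto_zero.mpr hdtend
end

section
/- Let F = (f_1, …, f_m) : ℝⁿ → ℝᵐ be continuously differentiable, β ∈ (0,1), and let (p^k), (v^k), (t_k) be infinite sequences generated by the steepest descent method with Armijo rule. If there exists p̃ ∈ ℝⁿ with f_i(p̃) ≤ f_i(p^k) for all i = 1, …, m and all k ∈ ℕ, then Σ_{k=0}^∞ t_k² ‖v^k‖² < ∞. -/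
noncomputable section

/-- The set of candidate Armijo steplengths `{2⁻ʲ : j ∈ ℕ}` at the point `p`
in the direction `v`, for the multicriteria function `f` with parameter `β`. -/
def armijoSet {n m : ℕ} (f : Fin m → EuclideanSpace ℝ (Fin n) → ℝ) (β : ℝ)
    (p v : EuclideanSpace ℝ (Fin n)) : Set ℝ :=
  {t : ℝ | (∃ j : ℕ, t = (1 / 2 : ℝ) ^ j) ∧
    ∀ i, f i (p + t • v) ≤ f i p + β * t * (inner ℝ (gradient (f i) p) v : ℝ)}

/-- Summability claim from the proof of Proposition 21 (Euclidean case): if some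
`p̃` satisfies `F(p̃) ≼ F(pᵏ)` for all `k`, then `∑ₖ tₖ²‖vᵏ‖² < ∞`. -/
theorem steepest_descent_summable
    {n m : ℕ} (hm : 0 < m) (f : Fin m → EuclideanSpace ℝ (Fin n) → ℝ)
    (hf : ∀ i, ContDiff ℝ 1 (f i)) (β : ℝ) (hβ : β ∈ Set.Ioo (0 : ℝ) 1)
    (p v : ℕ → EuclideanSpace ℝ (Fin n)) (t : ℕ → ℝ)
    -- each `pᵏ` is not Pareto critical
    (hcrit : ∀ k, ∃ w, ∀ i, (inner ℝ (gradient (f i) (p k)) w : ℝ) < 0)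
    -- `vᵏ` is the steepest descent direction at `pᵏ`
    (hv : ∀ k w,
      (⨆ i, (inner ℝ (gradient (f i) (p k)) (v k) : ℝ)) + ‖v k‖ ^ 2 / 2 ≤
        (⨆ i, (inner ℝ (gradient (f i) (p k)) w : ℝ)) + ‖w‖ ^ 2 / 2)
    -- `tₖ` is the largest Armijo steplength of the form `2⁻ʲ`
    (ht : ∀ k, IsGreatest (armijoSet f β (p k) (v k)) (t k))
    (hp : ∀ k, p (k + 1) = p k + t k • v k)
    (ptilde : EuclideanSpace ℝ (Fin n))
    (hptilde : ∀ k i, f i ptilde ≤ f i (p k)) :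
    Summable (fun k => t k ^ 2 * ‖v k‖ ^ 2) := by
  obtain ⟨hβ0, hβ1⟩ := hβ
  haveI : Nonempty (Fin m) := ⟨⟨0, hm⟩⟩
  set i0 : Fin m := ⟨0, hm⟩
  have ht_mem := fun k => (ht k).1
  have ht_pos : ∀ k, 0 < t k := by
    intro k
    obtain ⟨⟨j, hj⟩, _⟩ := ht_mem k
    rw [hj]; positivity
  have ht_le1 : ∀ k, t k ≤ 1 := by
    intro k
    obtain ⟨⟨j, hj⟩, _⟩ := ht_mem k
    rw [hj]
    exact pow_le_one₀ (by norm_num) (by norm_num)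
  have hdesc : ∀ k i, (inner ℝ (gradient (f i) (p k)) (v k) : ℝ) ≤ -(‖v k‖ ^ 2 / 2) := by
    intro k i
    have h0 := hv k 0
    have e1 : (⨆ i, (inner ℝ (gradient (f i) (p k)) (0 : EuclideanSpace ℝ (Fin n)) : ℝ)) = 0 := by
      simp [inner_zero_right]
    rw [e1, norm_zero] at h0
    have hle : (inner ℝ (gradient (f i) (p k)) (v k) : ℝ) ≤
        ⨆ j, (inner ℝ (gradient (f j) (p k)) (v k) : ℝ) :=
      le_ciSup (f := fun j => (inner ℝ (gradient (f j) (p k)) (v k) : ℝ))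
        (Set.Finite.bddAbove (Set.finite_range _)) i
    linarith
  have key : ∀ k i, f i (p (k + 1)) + (β / 2) * (t k * ‖v k‖ ^ 2) ≤ f i (p k) := by
    intro k i
    have h1 := (ht_mem k).2 i
    rw [← hp k] at h1
    have h2 := hdesc k i
    nlinarith [mul_le_mul_of_nonneg_left h2 (le_of_lt (mul_pos hβ0 (ht_pos k)))]
  have hsum' : ∀ N, ∑ k ∈ Finset.range N, (β / 2) * (t k * ‖v k‖ ^ 2) ≤
      f i0 (p 0) - f i0 (p N) := by
    intro N
    induction N with
    | zero => simp
    | succ N ih =>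
      rw [Finset.sum_range_succ]
      have := key N i0
      linarith
  have hbd : ∀ N, ∑ k ∈ Finset.range N, t k ^ 2 * ‖v k‖ ^ 2 ≤
      (f i0 (p 0) - f i0 ptilde) / (β / 2) := by
    intro N
    have h1 : ∑ k ∈ Finset.range N, t k ^ 2 * ‖v k‖ ^ 2 ≤
        ∑ k ∈ Finset.range N, t k * ‖v k‖ ^ 2 := by
      apply Finset.sum_le_sum
      intro k _
      have := ht_pos k
      have := ht_le1 k
      nlinarith [mul_nonneg (mul_nonneg (ht_pos k).le (sub_nonneg.mpr (ht_le1 k)))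
        (sq_nonneg ‖v k‖)]
    have h2 := hsum' N
    rw [← Finset.mul_sum] at h2
    have h3 := hptilde N i0
    have hc : (0 : ℝ) < β / 2 := by linarith
    rw [le_div_iff₀ hc]
    nlinarith
  exact summable_of_sum_range_le (fun k => by positivity) hbd
end
end

section
/- Let F = (f_1, …, f_m) : ℝⁿ → ℝᵐ be continuously differentiable and quasi-convex, β ∈ (0,1), and let (p^k), (v^k), (t_k) be infinite sequences generated by the steepest descent method with Armijo rule. If the set U := {p ∈ ℝⁿ : f_i(p) ≤ f_i(p^k) for all i = 1, …, m and all k ∈ ℕ} is nonempty, then the sequence (p^k) is quasi-Fejér convergent to U, i.e., for every q ∈ U there is a sequence (ε_k) of nonnegative reals with Σ_{k=0}^∞ ε_k < ∞ and ‖p^{k+1} − q‖² ≤ ‖p^k − q‖² + ε_k for all k. -/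
noncomputable section

/-- If `g` does not increase along the segment from `a` to `b`, then the directional
derivative of `g` at `a` in the direction `b - a` is nonpositive. -/
lemma inner_grad_nonpos {n : ℕ} {g : EuclideanSpace ℝ (Fin n) → ℝ} (hg : ContDiff ℝ 1 g)
    {a b : EuclideanSpace ℝ (Fin n)}
    (hseg : ∀ s ∈ Set.Icc (0 : ℝ) 1, g ((1 - s) • a + s • b) ≤ g a) :
    (inner ℝ (gradient g a) (b - a) : ℝ) ≤ 0 := by
  set u : EuclideanSpace ℝ (Fin n) := b - a with hu
  have hd : HasFDerivAt g (fderiv ℝ g a) a := (hg.differentiable one_ne_zero a).hasFDerivAt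
  have hL : HasDerivAt (fun s : ℝ => a + s • u) u 0 := by
    simpa using ((hasDerivAt_id (0 : ℝ)).smul_const u).const_add a
  have hd' : HasFDerivAt g (fderiv ℝ g a) (a + (0:ℝ) • u) := by
    simpa using hd
  have hφ : HasDerivAt (fun s : ℝ => g (a + s • u)) (fderiv ℝ g a u) 0 := by
    exact
      HasFDerivAt.comp_hasDerivAt (f := fun s : ℝ => a + s • u) (x := (0:ℝ)) hd' hL
  have hkey : fderiv ℝ g a u ≤ 0 := by
    have hslope := hasDerivAt_iff_tendsto_slope.mp hφ
    have h2 : Filter.Tendsto (slope (fun s : ℝ => g (a + s • u)) 0) (nhdsWithin 0 (Set.Ioi 0))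
        (nhds (fderiv ℝ g a u)) :=
      hslope.mono_left (nhdsWithin_mono _ (fun x hx => ne_of_gt hx))
    refine le_of_tendsto h2 ?_
    filter_upwards [Ioo_mem_nhdsGT_of_mem (by norm_num : (0:ℝ) ∈ Set.Ico (0:ℝ) 1)] with s hs
    have hsle := hseg s ⟨hs.1.le, hs.2.le⟩
    have heq : (1 - s) • a + s • b = a + s • u := by
      rw [hu, sub_smul, one_smul, smul_sub]; abel
    rw [heq] at hsle
    have h0 : g (a + (0:ℝ) • u) = g a := by simp
    rw [slope_def_field]
    simp only [sub_zero]
    rw [h0]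
    exact div_nonpos_of_nonpos_of_nonneg (by linarith) hs.1.le
  have hgrad : (inner ℝ (gradient g a) u : ℝ) = fderiv ℝ g a u := by
    unfold gradient
    exact InnerProductSpace.toDual_symm_apply
  linarith [hgrad.le.trans hkey]

/-- Proposition 21 (Euclidean case): if `F` is quasi-convex and the set
`U = {p : F(p) ≼ F(pᵏ) ∀k}` is nonempty, then the sequence `(pᵏ)` is
quasi-Fejér convergent to `U`. -/
theorem steepest_descent_quasiFejer
    {n m : ℕ} (hm : 0 < m) (f : Fin m → EuclideanSpace ℝ (Fin n) → ℝ)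
    (hf : ∀ i, ContDiff ℝ 1 (f i))
    -- quasi-convexity of `F`
    (hqc : ∀ p q : EuclideanSpace ℝ (Fin n), ∀ s ∈ Set.Icc (0 : ℝ) 1, ∀ i,
      f i ((1 - s) • p + s • q) ≤ max (f i p) (f i q))
    (β : ℝ) (hβ : β ∈ Set.Ioo (0 : ℝ) 1)
    (p v : ℕ → EuclideanSpace ℝ (Fin n)) (t : ℕ → ℝ)
    -- each `pᵏ` is not Pareto critical
    (hcrit : ∀ k, ∃ w, ∀ i, (inner ℝ (gradient (f i) (p k)) w : ℝ) < 0)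
    -- `vᵏ` is the steepest descent direction at `pᵏ`
    (hv : ∀ k w,
      (⨆ i, (inner ℝ (gradient (f i) (p k)) (v k) : ℝ)) + ‖v k‖ ^ 2 / 2 ≤
        (⨆ i, (inner ℝ (gradient (f i) (p k)) w : ℝ)) + ‖w‖ ^ 2 / 2)
    -- `tₖ` is the largest Armijo steplength of the form `2⁻ʲ`
    (ht : ∀ k, IsGreatest (armijoSet f β (p k) (v k)) (t k))
    (hp : ∀ k, p (k + 1) = p k + t k • v k)
    (hU : {q : EuclideanSpace ℝ (Fin n) | ∀ k i, f i q ≤ f i (p k)}.Nonempty) :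
    ∀ q ∈ {q : EuclideanSpace ℝ (Fin n) | ∀ k i, f i q ≤ f i (p k)},
      ∃ ε : ℕ → ℝ, (∀ k, 0 ≤ ε k) ∧ Summable ε ∧
        ∀ k, ‖p (k + 1) - q‖ ^ 2 ≤ ‖p k - q‖ ^ 2 + ε k := by
  intro q hq
  haveI : Nonempty (Fin m) := ⟨⟨0, hm⟩⟩
  set i0 : Fin m := ⟨0, hm⟩
  obtain ⟨hβ0, hβ1⟩ := hβ
  -- basic facts about t k
  have htpos : ∀ k, 0 < t k := by
    intro k
    obtain ⟨⟨j, hj⟩, -⟩ := (ht k).1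
    rw [hj]; positivity
  have ht1 : ∀ k, t k ≤ 1 := by
    intro k
    obtain ⟨⟨j, hj⟩, -⟩ := (ht k).1
    rw [hj]; exact pow_le_one₀ (by norm_num) (by norm_num)
  -- boundedness of the finite suprema
  have hbd : ∀ (k : ℕ) (w : EuclideanSpace ℝ (Fin n)),
      BddAbove (Set.range fun i => (inner ℝ (gradient (f i) (p k)) w : ℝ)) :=
    fun k w => Set.Finite.bddAbove (Set.finite_range _)
  -- (A) each directional derivative along v k is ≤ -‖v k‖²/2
  have hA : ∀ k i, (inner ℝ (gradient (f i) (p k)) (v k) : ℝ) ≤ -‖v k‖ ^ 2 / 2 := by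
    intro k i
    have h0 := hv k 0
    have hz : (⨆ i, (inner ℝ (gradient (f i) (p k)) (0 : EuclideanSpace ℝ (Fin n)) : ℝ)) = 0 := by
      simp [inner_zero_right]
    rw [hz] at h0
    simp only [norm_zero] at h0
    have hle := le_ciSup (hbd k (v k)) i
    have : (0:ℝ) ^ 2 / 2 = 0 := by norm_num
    rw [this] at h0
    linarith
  -- (E) ⟨v k, q - p k⟩ ≥ 0
  have hE : ∀ k, (0:ℝ) ≤ inner ℝ (v k) (q - p k) := by
    intro k
    set u : EuclideanSpace ℝ (Fin n) := q - p k with hu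
    -- directional derivative toward q is nonpositive for each i
    have hDi : ∀ i, (inner ℝ (gradient (f i) (p k)) u : ℝ) ≤ 0 := by
      intro i
      refine inner_grad_nonpos (hf i) ?_
      intro s hs
      have := hqc (p k) q s hs i
      have hmax : max (f i (p k)) (f i q) = f i (p k) := max_eq_left (hq k i)
      rw [hmax] at this
      exact this
    -- for every s > 0, perturbing v k by s•u cannot decrease the objective
    have hkey : ∀ s : ℝ, 0 < s →
        (0:ℝ) ≤ s * inner ℝ (v k) u + s ^ 2 * ‖u‖ ^ 2 / 2 := by
      intro s hs
      have h1 := hv k (v k + s • u)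
      have hsup : (⨆ i, (inner ℝ (gradient (f i) (p k)) (v k + s • u) : ℝ)) ≤
          ⨆ i, (inner ℝ (gradient (f i) (p k)) (v k) : ℝ) := by
        refine ciSup_le fun i => ?_
        have : (inner ℝ (gradient (f i) (p k)) (v k + s • u) : ℝ) =
            inner ℝ (gradient (f i) (p k)) (v k) + s * inner ℝ (gradient (f i) (p k)) u := by
          rw [inner_add_right, real_inner_smul_right]
        rw [this]
        have h2 : s * (inner ℝ (gradient (f i) (p k)) u : ℝ) ≤ 0 :=
          mul_nonpos_of_nonneg_of_nonpos hs.le (hDi i)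
        calc (inner ℝ (gradient (f i) (p k)) (v k) : ℝ) + s * inner ℝ (gradient (f i) (p k)) u
            ≤ inner ℝ (gradient (f i) (p k)) (v k) := by linarith
          _ ≤ _ := le_ciSup (hbd k (v k)) i
      have hnorm : ‖v k + s • u‖ ^ 2 =
          ‖v k‖ ^ 2 + 2 * (s * inner ℝ (v k) u) + s ^ 2 * ‖u‖ ^ 2 := by
        rw [norm_add_sq_real, real_inner_smul_right, norm_smul]
        rw [mul_pow, Real.norm_eq_abs, sq_abs]
      nlinarith [h1, hsup]
    by_contra hneg
    push_neg at hneg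
    set c : ℝ := -(inner ℝ (v k) u : ℝ) with hc
    have hcpos : 0 < c := by rw [hc]; linarith
    have hden : (0:ℝ) < ‖u‖ ^ 2 + 1 := by positivity
    set s : ℝ := c / (‖u‖ ^ 2 + 1) with hsdef
    have hspos : 0 < s := div_pos hcpos hden
    have h3 := hkey s hspos
    have hs1 : s * (‖u‖ ^ 2 + 1) = c := by
      rw [hsdef]; field_simp
    nlinarith [h3, hspos, sq_nonneg ‖u‖, mul_pos hspos hspos]
  -- (B) Armijo decrease
  have hArm : ∀ k i, f i (p (k + 1)) ≤ f i (p k) - β * t k * (‖v k‖ ^ 2 / 2) := by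
    intro k i
    have h1 := (ht k).1.2 i
    rw [← hp k] at h1
    have h2 := hA k i
    have h3 := htpos k
    have h4 : β * t k * (inner ℝ (gradient (f i) (p k)) (v k) : ℝ) ≤
        β * t k * (-‖v k‖ ^ 2 / 2) :=
      mul_le_mul_of_nonneg_left h2 (by positivity)
    linarith
  -- summability
  have hsum0 : Summable (fun k => β / 2 * (t k * ‖v k‖ ^ 2)) := by
    apply summable_of_sum_range_le (c := f i0 (p 0) - f i0 q)
    · intro k
      have := htpos k
      positivity
    · intro N
      have hstep : ∀ k, β / 2 * (t k * ‖v k‖ ^ 2) ≤ f i0 (p k) - f i0 (p (k + 1)) := by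
        intro k
        have := hArm k i0
        nlinarith [htpos k]
      calc ∑ k ∈ Finset.range N, β / 2 * (t k * ‖v k‖ ^ 2)
          ≤ ∑ k ∈ Finset.range N, (f i0 (p k) - f i0 (p (k + 1))) :=
            Finset.sum_le_sum fun k _ => hstep k
        _ = f i0 (p 0) - f i0 (p N) := Finset.sum_range_sub' (fun k => f i0 (p k)) N
        _ ≤ f i0 (p 0) - f i0 q := by linarith [hq N i0]
  have hsum1 : Summable (fun k => t k * ‖v k‖ ^ 2) := by
    have := hsum0.mul_left (2 / β)
    refine this.congr fun k => ?_
    field_simp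
  refine ⟨fun k => t k ^ 2 * ‖v k‖ ^ 2, ?_, ?_, ?_⟩
  · intro k; positivity
  · refine hsum1.of_nonneg_of_le (fun k => by positivity) (fun k => ?_)
    have h1 := htpos k
    have h2 := ht1 k
    have h3 : t k ^ 2 ≤ t k := by nlinarith [mul_nonneg h1.le (sub_nonneg.mpr h2)]
    exact mul_le_mul_of_nonneg_right h3 (sq_nonneg _)
  · intro k
    show ‖p (k + 1) - q‖ ^ 2 ≤ ‖p k - q‖ ^ 2 + t k ^ 2 * ‖v k‖ ^ 2
    rw [hp k]
    have heq : p k + t k • v k - q = (p k - q) + t k • v k := by abel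
    rw [heq, norm_add_sq_real, real_inner_smul_right, norm_smul, mul_pow,
      Real.norm_eq_abs, sq_abs]
    have hip : (inner ℝ (p k - q) (v k) : ℝ) = -(inner ℝ (v k) (q - p k) : ℝ) := by
      rw [real_inner_comm, ← inner_neg_right, neg_sub]
    have := hE k
    have hcross : 2 * (t k * (inner ℝ (p k - q) (v k) : ℝ)) ≤ 0 := by
      rw [hip]
      nlinarith [htpos k]
    linarith
end
end

section
/- Let F = (f_1, …, f_m) : ℝⁿ → ℝᵐ be continuously differentiable and quasi-convex, β ∈ (0,1), and let (p^k), (v^k), (t_k) be infinite sequences generated by the steepest descent method with Armijo rule. If the set U := {p ∈ ℝⁿ : f_i(p) ≤ f_i(p^k) for all i = 1, …, m and all k ∈ ℕ} is nonempty, then the sequence (p^k) converges to a point p̄ ∈ ℝⁿ that is Pareto critical for F. -/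
noncomputable section

open Filter

namespace SDAux

variable {n : ℕ}

lemma inner_gradient (f : EuclideanSpace ℝ (Fin n) → ℝ) (x w : EuclideanSpace ℝ (Fin n)) :
    (inner ℝ (gradient f x) w : ℝ) = fderiv ℝ f x w := by
  simp [gradient, InnerProductSpace.toDual_symm_apply]

lemma continuous_gradient {f : EuclideanSpace ℝ (Fin n) → ℝ} (hf : ContDiff ℝ 1 f) :
    Continuous (gradient f) := by
  unfold gradient
  exact (InnerProductSpace.toDual ℝ _).symm.continuous.comp (hf.continuous_fderiv one_ne_zero)

lemma line_deriv (f : EuclideanSpace ℝ (Fin n) → ℝ) (hf : ContDiff ℝ 1 f)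
    (x v : EuclideanSpace ℝ (Fin n)) (s : ℝ) :
    HasDerivAt (fun s : ℝ => f (x + s • v))
      ((inner ℝ (gradient f (x + s • v)) v : ℝ)) s := by
  have hd : HasFDerivAt f (fderiv ℝ f (x + s • v)) (x + s • v) :=
    ((hf.differentiable one_ne_zero) (x + s • v)).hasFDerivAt
  have hline : HasDerivAt (fun s : ℝ => x + s • v) v s := by
    simpa using ((hasDerivAt_id s).smul_const v).const_add x
  have h := hd.comp_hasDerivAt s hline
  rw [inner_gradient]
  exact h

lemma qc_grad (f : EuclideanSpace ℝ (Fin n) → ℝ) (hf : ContDiff ℝ 1 f)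
    (hqc : ∀ p q : EuclideanSpace ℝ (Fin n), ∀ s ∈ Set.Icc (0:ℝ) 1,
      f ((1-s) • p + s • q) ≤ max (f p) (f q))
    (x q : EuclideanSpace ℝ (Fin n)) (hle : f q ≤ f x) :
    (inner ℝ (gradient f x) (q - x) : ℝ) ≤ 0 := by
  have hder : HasDerivAt (fun s : ℝ => f (x + s • (q - x)))
      ((inner ℝ (gradient f x) (q - x) : ℝ)) 0 := by
    simpa using line_deriv f hf x (q - x) 0
  have hten : Tendsto (fun s : ℝ => (f (x + s • (q - x)) - f x) / s)
      (nhdsWithin 0 (Set.Ioi 0)) (nhds ((inner ℝ (gradient f x) (q - x) : ℝ))) := by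
    have h1 := (hasDerivAt_iff_tendsto_slope.1 hder).mono_left
      (nhdsWithin_mono 0 (fun y hy => ne_of_gt hy))
    have h2 : slope (fun s : ℝ => f (x + s • (q - x))) 0
        = fun s => (f (x + s • (q - x)) - f x) / s := by
      funext s
      simp [slope_def_field, sub_zero]
    rw [h2] at h1
    exact h1
  refine le_of_tendsto hten ?_
  filter_upwards [Ioc_mem_nhdsGT_of_mem (Set.mem_Ico.2 ⟨le_rfl, one_pos⟩)] with s hs
  have h := hqc x q s ⟨hs.1.le, hs.2⟩
  have heq : (1 - s) • x + s • q = x + s • (q - x) := by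
    rw [smul_sub]; module
  rw [heq, max_eq_left hle] at h
  exact div_nonpos_of_nonpos_of_nonneg (by linarith) hs.1.le

lemma antitone_tendsto {b : ℕ → ℝ} (hb : Antitone b) {φ : ℕ → ℕ} (hφ : StrictMono φ)
    {L : ℝ} (h : Tendsto (b ∘ φ) atTop (nhds L)) : Tendsto b atTop (nhds L) := by
  rcases tendsto_of_antitone hb with h1 | ⟨l, hl⟩
  · exfalso
    have h2 := (h1.comp hφ.tendsto_atTop).eventually_le_atBot (L - 2)
    have h3 := h.eventually (eventually_ge_nhds (show L - 1 < L by linarith))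
    rcases (h2.and h3).exists with ⟨j, hj1, hj2⟩
    linarith
  · have h2 := hl.comp hφ.tendsto_atTop
    rw [tendsto_nhds_unique h h2]
    exact hl

lemma le_of_antitone_subseq {a : ℕ → ℝ} (ha : Antitone a) {φ : ℕ → ℕ} (hφ : StrictMono φ)
    {L : ℝ} (h : Tendsto (a ∘ φ) atTop (nhds L)) (k : ℕ) : L ≤ a k :=
  le_of_tendsto h (eventually_atTop.2 ⟨k, fun j hj => ha (le_trans hj hφ.le_apply)⟩)

lemma fejer_tendsto {a ε : ℕ → ℝ} (ha0 : ∀ k, 0 ≤ a k) (hε0 : ∀ k, 0 ≤ ε k)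
    (hε : Summable ε) (hrec : ∀ k, a (k+1) ≤ a k + ε k)
    {φ : ℕ → ℕ} (hφ : StrictMono φ) (h0 : Tendsto (a ∘ φ) atTop (nhds 0)) :
    Tendsto a atTop (nhds 0) := by
  have hTrec : ∀ k, (∑' l, ε (l + k)) = ε k + ∑' l, ε (l + (k+1)) := by
    intro k
    rw [Summable.tsum_eq_zero_add ((summable_nat_add_iff k).2 hε)]
    simp [add_comm, add_assoc, add_left_comm]
  set T : ℕ → ℝ := fun k => ∑' l, ε (l + k) with hT
  have hTnn : ∀ k, 0 ≤ T k := fun k => tsum_nonneg (fun l => hε0 _)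
  have hb : Antitone (fun k => a k + T k) := antitone_nat_of_succ_le (fun k => by
    have h1 := hrec k
    have h2 := hTrec k
    show a (k+1) + T (k+1) ≤ a k + T k
    have h3 : T k = ε k + T (k+1) := h2
    linarith)
  have hT0 : Tendsto T atTop (nhds 0) := tendsto_sum_nat_add ε
  have hbφ : Tendsto ((fun k => a k + T k) ∘ φ) atTop (nhds 0) := by
    have := h0.add (hT0.comp hφ.tendsto_atTop)
    simpa [Function.comp_def] using this
  have hb0 := antitone_tendsto hb hφ hbφ
  exact squeeze_zero ha0 (fun k => le_add_of_nonneg_right (hTnn k)) hb0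

end SDAux

set_option maxHeartbeats 2000000 in
/-- Theorem 22 (Euclidean case): if `F` is quasi-convex and the set
`U = {p : F(p) ≼ F(pᵏ) ∀k}` is nonempty, then the sequence `(pᵏ)` generated by
the steepest descent method with Armijo rule converges to a Pareto critical
point of `F`. -/
theorem steepest_descent_full_convergence
    {n m : ℕ} (hm : 0 < m) (f : Fin m → EuclideanSpace ℝ (Fin n) → ℝ)
    (hf : ∀ i, ContDiff ℝ 1 (f i))
    -- quasi-convexity of `F`
    (hqc : ∀ p q : EuclideanSpace ℝ (Fin n), ∀ s ∈ Set.Icc (0 : ℝ) 1, ∀ i,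
      f i ((1 - s) • p + s • q) ≤ max (f i p) (f i q))
    (β : ℝ) (hβ : β ∈ Set.Ioo (0 : ℝ) 1)
    (p v : ℕ → EuclideanSpace ℝ (Fin n)) (t : ℕ → ℝ)
    -- each `pᵏ` is not Pareto critical
    (hcrit : ∀ k, ∃ w, ∀ i, (inner ℝ (gradient (f i) (p k)) w : ℝ) < 0)
    -- `vᵏ` is the steepest descent direction at `pᵏ`
    (hv : ∀ k w,
      (⨆ i, (inner ℝ (gradient (f i) (p k)) (v k) : ℝ)) + ‖v k‖ ^ 2 / 2 ≤
        (⨆ i, (inner ℝ (gradient (f i) (p k)) w : ℝ)) + ‖w‖ ^ 2 / 2)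
    -- `tₖ` is the largest Armijo steplength of the form `2⁻ʲ`
    (ht : ∀ k, IsGreatest (armijoSet f β (p k) (v k)) (t k))
    (hp : ∀ k, p (k + 1) = p k + t k • v k)
    (hU : {q : EuclideanSpace ℝ (Fin n) | ∀ k i, f i q ≤ f i (p k)}.Nonempty) :
    ∃ pbar : EuclideanSpace ℝ (Fin n), Tendsto p atTop (nhds pbar) ∧
      ¬ ∃ w, ∀ i, (inner ℝ (gradient (f i) pbar) w : ℝ) < 0 := by
  classical
  have hmne : Nonempty (Fin m) := ⟨⟨0, hm⟩⟩
  obtain ⟨q, hq⟩ := hU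
  set i₀ : Fin m := ⟨0, hm⟩ with hi₀
  have hβ0 : 0 < β := hβ.1
  have hβ1 : β < 1 := hβ.2
  -- boundedness of the finite sups
  have hbdd : ∀ (x w : EuclideanSpace ℝ (Fin n)),
      BddAbove (Set.range fun i : Fin m => (inner ℝ (gradient (f i) x) w : ℝ)) :=
    fun x w => Set.Finite.bddAbove (Set.finite_range _)
  -- each inner product is at most -‖v k‖²/2
  have hsup_le : ∀ k i, (inner ℝ (gradient (f i) (p k)) (v k) : ℝ) ≤ -(‖v k‖^2) / 2 := by
    intro k i
    have h0 := hv k 0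
    simp only [inner_zero_right, ciSup_const, norm_zero] at h0
    have hle := le_ciSup (hbdd (p k) (v k)) i
    have h2 : (0:ℝ) ^ 2 / 2 = 0 := by norm_num
    rw [h2] at h0
    linarith
  -- step sizes
  have htpos : ∀ k, 0 < t k := by
    intro k
    obtain ⟨j, hj⟩ := (ht k).1.1
    rw [hj]; positivity
  have htle1 : ∀ k, t k ≤ 1 := by
    intro k
    obtain ⟨j, hj⟩ := (ht k).1.1
    rw [hj]; exact pow_le_one₀ (by norm_num) (by norm_num)
  -- Armijo inequality
  have harm : ∀ k i, f i (p (k+1)) ≤ f i (p k)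
      + β * t k * (inner ℝ (gradient (f i) (p k)) (v k) : ℝ) := by
    intro k i
    rw [hp k]
    exact (ht k).1.2 i
  have hdec : ∀ k i, f i (p (k+1)) ≤ f i (p k) - β * t k * (‖v k‖^2 / 2) := by
    intro k i
    have h1 := harm k i
    have h2 := hsup_le k i
    have h3 : 0 < β * t k := mul_pos hβ0 (htpos k)
    nlinarith
  have hfanti : ∀ i, Antitone (fun k => f i (p k)) := by
    intro i
    apply antitone_nat_of_succ_le
    intro k
    have h1 := hdec k i
    have h3 : 0 ≤ β * t k * (‖v k‖^2 / 2) :=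
      mul_nonneg (mul_nonneg hβ0.le (htpos k).le) (by positivity)
    show f i (p (k+1)) ≤ f i (p k)
    linarith
  -- the error terms
  set ε : ℕ → ℝ := fun k => t k * ‖v k‖^2 with hεdef
  have hε0 : ∀ k, 0 ≤ ε k := fun k => by
    have := (htpos k).le; positivity
  have hεsum : Summable ε := by
    apply summable_of_sum_range_le hε0 (c := 2 * (f i₀ (p 0) - f i₀ q) / β)
    intro N
    have h1 : ∑ k ∈ Finset.range N, (β/2 * ε k)
        ≤ ∑ k ∈ Finset.range N, (f i₀ (p k) - f i₀ (p (k+1))) := by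
      apply Finset.sum_le_sum
      intro k _
      have := hdec k i₀
      simp only [hεdef]
      linarith
    rw [Finset.sum_range_sub' (fun k => f i₀ (p k)) N, ← Finset.mul_sum] at h1
    have h2 : f i₀ q ≤ f i₀ (p N) := hq N i₀
    rw [le_div_iff₀ hβ0]
    nlinarith
  -- Fejér inequality w.r.t. any point dominated by the whole sequence
  have hfejer : ∀ q' : EuclideanSpace ℝ (Fin n), (∀ k i, f i q' ≤ f i (p k)) →
      ∀ k, ‖p (k+1) - q'‖^2 ≤ ‖p k - q'‖^2 + ε k := by
    intro q' hq' k
    have hqg : ∀ i, (inner ℝ (gradient (f i) (p k)) (q' - p k) : ℝ) ≤ 0 := fun i =>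
      SDAux.qc_grad (f i) (hf i) (fun a b s hs => hqc a b s hs i) (p k) q' (hq' k i)
    have hdir : 0 ≤ (inner ℝ (v k) (q' - p k) : ℝ) := by
      set u := q' - p k with hu
      have key : ∀ s : ℝ, 0 < s →
          0 ≤ 2*s*(inner ℝ (v k) u : ℝ) + s^2 * ‖u‖^2 := by
        intro s hs
        have h1 : (⨆ i, (inner ℝ (gradient (f i) (p k)) (v k + s • u) : ℝ))
            ≤ ⨆ i, (inner ℝ (gradient (f i) (p k)) (v k) : ℝ) := by
          apply ciSup_le
          intro i
          have he : (inner ℝ (gradient (f i) (p k)) (v k + s • u) : ℝ)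
              = (inner ℝ (gradient (f i) (p k)) (v k) : ℝ)
                + s * (inner ℝ (gradient (f i) (p k)) u : ℝ) := by
            rw [inner_add_right, real_inner_smul_right]
          rw [he]
          have h2 : s * (inner ℝ (gradient (f i) (p k)) u : ℝ) ≤ 0 :=
            mul_nonpos_iff.2 (Or.inl ⟨hs.le, hqg i⟩)
          have h3 := le_ciSup (hbdd (p k) (v k)) i
          linarith
        have h4 := hv k (v k + s • u)
        have h5 : ‖v k + s • u‖^2
            = ‖v k‖^2 + 2*(s*(inner ℝ (v k) u : ℝ)) + s^2*‖u‖^2 := by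
          rw [norm_add_sq_real, real_inner_smul_right, norm_smul]
          simp only [Real.norm_eq_abs, mul_pow, sq_abs]
        linarith
      have hten : Tendsto (fun s : ℝ => -(s * ‖u‖^2)/2)
          (nhdsWithin 0 (Set.Ioi 0)) (nhds 0) := by
        have hc : Continuous fun s : ℝ => -(s * ‖u‖^2)/2 := by fun_prop
        have h := (hc.tendsto 0).mono_left
          (nhdsWithin_le_nhds : nhdsWithin (0:ℝ) (Set.Ioi 0) ≤ nhds 0)
        simpa using h
      refine le_of_tendsto hten
        (eventually_of_mem self_mem_nhdsWithin (fun s hs => ?_))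
      have hkey := key s hs
      have hs' : (0:ℝ) < s := hs
      nlinarith
    have hexp : ‖p (k+1) - q'‖^2 = ‖p k - q'‖^2
        + 2*(t k * (inner ℝ (p k - q') (v k) : ℝ)) + (t k)^2*‖v k‖^2 := by
      rw [hp k]
      have he : p k + t k • v k - q' = (p k - q') + t k • v k := by abel
      rw [he, norm_add_sq_real, real_inner_smul_right, norm_smul]
      simp only [Real.norm_eq_abs, mul_pow, sq_abs]
    have hinner : (inner ℝ (p k - q') (v k) : ℝ) ≤ 0 := by
      have he : (inner ℝ (v k) (q' - p k) : ℝ) = -(inner ℝ (p k - q') (v k) : ℝ) := by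
        rw [real_inner_comm]
        have : q' - p k = -(p k - q') := by abel
        rw [this, inner_neg_left]
      linarith
    have ht2 : (t k)^2 * ‖v k‖^2 ≤ ε k := by
      have h1 := htpos k
      have h2 := htle1 k
      have h3 : (t k)^2 ≤ t k := by nlinarith
      show (t k)^2 * ‖v k‖^2 ≤ t k * ‖v k‖^2
      nlinarith [sq_nonneg ‖v k‖]
    have h4 : 0 ≤ t k := (htpos k).le
    nlinarith [mul_nonneg h4 (neg_nonneg.2 hinner)]
  -- boundedness of the sequence and a convergent subsequence
  have hstep : ∀ k, ‖p k - q‖^2 ≤ ‖p 0 - q‖^2 + ∑ l ∈ Finset.range k, ε l := by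
    intro k
    induction k with
    | zero => simp
    | succ k ih =>
      have h1 := hfejer q hq k
      rw [Finset.sum_range_succ]
      linarith
  have haq : ∀ k, ‖p k - q‖^2 ≤ ‖p 0 - q‖^2 + ∑' l, ε l := by
    intro k
    have h2 : ∑ l ∈ Finset.range k, ε l ≤ ∑' l, ε l :=
      Summable.sum_le_tsum _ (fun l _ => hε0 l) hεsum
    linarith [hstep k]
  -- Bolzano–Weierstrass
  set R := Real.sqrt (‖p 0 - q‖^2 + ∑' l, ε l) with hRdef
  have hball : ∀ k, p k ∈ Metric.closedBall q R := by
    intro k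
    rw [Metric.mem_closedBall, dist_eq_norm]
    calc ‖p k - q‖ = Real.sqrt (‖p k - q‖^2) := (Real.sqrt_sq (norm_nonneg _)).symm
    _ ≤ R := Real.sqrt_le_sqrt (haq k)
  obtain ⟨pbar, -, φ₁, hφ₁, hpφ₁⟩ :=
    tendsto_subseq_of_bounded Metric.isBounded_closedBall hball
  -- boundedness of the directions
  have hgcont : ∀ i : Fin m, Continuous (gradient (f i)) :=
    fun i => SDAux.continuous_gradient (hf i)
  have hvb : ∀ k, ‖v k‖ ≤ 2 * ‖gradient (f i₀) (p k)‖ := by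
    intro k
    have h1 := hsup_le k i₀
    have h2 := abs_real_inner_le_norm (gradient (f i₀) (p k)) (v k)
    have h3 := neg_abs_le ((inner ℝ (gradient (f i₀) (p k)) (v k) : ℝ))
    nlinarith [norm_nonneg (v k), norm_nonneg (gradient (f i₀) (p k))]
  have hgφ : Tendsto (fun j => gradient (f i₀) (p (φ₁ j))) atTop
      (nhds (gradient (f i₀) pbar)) := ((hgcont i₀).tendsto pbar).comp hpφ₁
  obtain ⟨C, hC⟩ : ∃ C : ℝ, ∀ j, ‖v (φ₁ j)‖ ≤ C := by
    obtain ⟨D, hD⟩ := hgφ.norm.bddAbove_range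
    refine ⟨2 * D, fun j => ?_⟩
    have h1 := hD (Set.mem_range_self j)
    have h2 := hvb (φ₁ j)
    change ‖gradient (f i₀) (p (φ₁ j))‖ ≤ D at h1
    nlinarith
  have hvball : ∀ j, v (φ₁ j) ∈ Metric.closedBall (0 : EuclideanSpace ℝ (Fin n)) C := by
    intro j
    rw [Metric.mem_closedBall, dist_zero_right]
    exact hC j
  obtain ⟨vbar, -, φ₂, hφ₂, hvψ⟩ :=
    tendsto_subseq_of_bounded Metric.isBounded_closedBall hvball
  set ψ : ℕ → ℕ := φ₁ ∘ φ₂ with hψdef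
  have hψ : StrictMono ψ := hφ₁.comp hφ₂
  have hpψ : Tendsto (p ∘ ψ) atTop (nhds pbar) := hpφ₁.comp hφ₂.tendsto_atTop
  have hvψ' : Tendsto (fun j => v (ψ j)) atTop (nhds vbar) := hvψ
  -- ε → 0 along the subsequence
  have hεψ : Tendsto (fun j => t (ψ j) * ‖v (ψ j)‖^2) atTop (nhds 0) :=
    hεsum.tendsto_atTop_zero.comp hψ.tendsto_atTop
  -- the subsequential limit of the directions is zero
  have hvbar0 : vbar = 0 := by
    by_contra hne
    have hvpos : 0 < ‖vbar‖ := norm_pos_iff.2 hne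
    have hCψ : ∀ j, ‖v (ψ j)‖ ≤ C := fun j => hC (φ₂ j)
    have hC0 : 0 ≤ C := le_trans (norm_nonneg _) (hC 0)
    have hD0 : 0 < C + 1 := by linarith
    -- the norms of the directions stay bounded away from zero
    have hnsq : Tendsto (fun j => ‖v (ψ j)‖^2) atTop (nhds (‖vbar‖^2)) := by
      have h := hvψ'.norm.mul hvψ'.norm
      simpa [pow_two] using h
    have E4 : ∀ᶠ j in atTop, ‖vbar‖^2/2 ≤ ‖v (ψ j)‖^2 :=
      hnsq.eventually (eventually_ge_nhds (by nlinarith))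
    -- the step sizes tend to zero
    have hub : Tendsto (fun j => (t (ψ j) * ‖v (ψ j)‖^2) * (2/‖vbar‖^2))
        atTop (nhds 0) := by
      have h := hεψ.mul_const (2/‖vbar‖^2)
      rwa [zero_mul] at h
    have htψ0 : Tendsto (fun j => t (ψ j)) atTop (nhds 0) := by
      refine tendsto_of_tendsto_of_tendsto_of_le_of_le' tendsto_const_nhds hub
        (Eventually.of_forall fun j => (htpos (ψ j)).le) (E4.mono fun j hj => ?_)
      have h1 := htpos (ψ j)
      have hB : (0:ℝ) < ‖vbar‖^2 := by positivity
      have he : t (ψ j) * ‖v (ψ j)‖^2 * (2/‖vbar‖^2)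
          = (2 * (t (ψ j) * ‖v (ψ j)‖^2))/‖vbar‖^2 := by ring
      rw [he, le_div_iff₀ hB]
      nlinarith [mul_nonneg h1.le
        (show (0:ℝ) ≤ ‖v (ψ j)‖^2 - ‖vbar‖^2/2 by linarith)]
    -- a uniform gradient estimate near pbar
    obtain ⟨δ, hδ0, hδle⟩ : ∃ δ : ℝ, 0 < δ ∧ 16 * δ ≤ (1-β)*‖vbar‖^2 :=
      ⟨(1-β)*‖vbar‖^2/16,
        div_pos (mul_pos (by linarith) (by positivity)) (by norm_num), by linarith⟩
    have hgev : ∀ᶠ x in nhds pbar, ∀ i : Fin m,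
        ‖gradient (f i) x - gradient (f i) pbar‖ < δ/(C+1) := by
      rw [eventually_all]
      intro i
      have h2 : Tendsto (fun x => ‖gradient (f i) x - gradient (f i) pbar‖)
          (nhds pbar) (nhds 0) := by
        have h := (((hgcont i).tendsto pbar).sub
          (tendsto_const_nhds (x := gradient (f i) pbar))).norm
        simpa using h
      exact h2.eventually (eventually_lt_nhds (by positivity))
    obtain ⟨ρ, hρ0, hball'⟩ := Metric.eventually_nhds_iff.1 hgev
    -- collect the eventual properties and pick one large index
    have E1 : ∀ᶠ j in atTop, dist (p (ψ j)) pbar < ρ/2 := by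
      have h := hpψ (Metric.ball_mem_nhds pbar (by positivity : (0:ℝ) < ρ/2))
      filter_upwards [h] with j hj
      exact Metric.mem_ball.1 hj
    have E2 : ∀ᶠ j in atTop, t (ψ j) * (2*(C+1)) < ρ/2 := by
      have h := htψ0.mul_const (2*(C+1))
      rw [zero_mul] at h
      exact h.eventually (eventually_lt_nhds (by positivity))
    have E3 : ∀ᶠ j in atTop, t (ψ j) < 1 := htψ0.eventually (eventually_lt_nhds one_pos)
    obtain ⟨j, hj1, hj2, hj3, hj4⟩ := (E1.and (E2.and (E3.and E4))).exists
    set k := ψ j with hkdef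
    -- the doubled step fails the Armijo test
    have hnotin : (2 * t k) ∉ armijoSet f β (p k) (v k) := by
      intro hmem
      have h := (ht k).2 hmem
      have h1 := htpos k
      linarith
    have h2t : ∃ j' : ℕ, 2 * t k = (1/2 : ℝ)^j' := by
      obtain ⟨j', hj'⟩ := (ht k).1.1
      match j', hj' with
      | 0, hj' => exfalso; rw [hj'] at hj3; norm_num at hj3
      | j''+1, hj' =>
        refine ⟨j'', ?_⟩
        rw [hj', pow_succ]
        ring
    obtain ⟨i, hi⟩ : ∃ i, f i (p k) + β*(2*t k)*(inner ℝ (gradient (f i) (p k)) (v k) : ℝ)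
        < f i (p k + (2*t k) • v k) := by
      by_contra hall
      push_neg at hall
      exact hnotin ⟨h2t, fun i => hall i⟩
    -- mean value theorem on [0, 2 t k]
    have h2tpos : 0 < 2 * t k := by linarith [htpos k]
    have hlinec : Continuous fun s : ℝ => p k + s • v k := by continuity
    have hcont : ContinuousOn (fun s : ℝ => f i (p k + s • v k))
        (Set.Icc 0 (2 * t k)) := ((hf i).continuous.comp hlinec).continuousOn
    have hder : ∀ s ∈ Set.Ioo (0:ℝ) (2*t k),
        HasDerivAt (fun s : ℝ => f i (p k + s • v k))
          ((inner ℝ (gradient (f i) (p k + s • v k)) (v k) : ℝ)) s :=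
      fun s _ => SDAux.line_deriv (f i) (hf i) (p k) (v k) s
    obtain ⟨c, hcmem, hceq⟩ := exists_hasDerivAt_eq_slope
      (fun s : ℝ => f i (p k + s • v k))
      (fun s : ℝ => (inner ℝ (gradient (f i) (p k + s • v k)) (v k) : ℝ))
      h2tpos hcont hder
    simp only [zero_smul, add_zero, sub_zero] at hceq
    -- the slope inequality
    have hslope : β * (inner ℝ (gradient (f i) (p k)) (v k) : ℝ)
        < (inner ℝ (gradient (f i) (p k + c • v k)) (v k) : ℝ) := by
      rw [hceq, lt_div_iff₀ h2tpos]
      nlinarith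
    -- the intermediate point is close to pbar
    have hcv : ‖c • v k‖ < ρ/2 := by
      rw [norm_smul, Real.norm_eq_abs, abs_of_pos hcmem.1]
      have h1 : c * ‖v k‖ ≤ (2 * t k) * (C+1) := by
        have := hCψ j
        have hvk : ‖v k‖ ≤ C + 1 := by rw [hkdef]; linarith [hCψ j]
        nlinarith [hcmem.1.le, hcmem.2.le, norm_nonneg (v k), htpos k]
      calc c * ‖v k‖ ≤ (2 * t k) * (C+1) := h1
      _ = t k * (2*(C+1)) := by ring
      _ < ρ/2 := hj2
    have hξ : dist (p k + c • v k) pbar < ρ := by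
      have h1 : dist (p k + c • v k) (p k) = ‖c • v k‖ := by
        rw [dist_eq_norm]
        congr 1
        abel
      calc dist (p k + c • v k) pbar ≤ dist (p k + c • v k) (p k) + dist (p k) pbar :=
        dist_triangle _ _ _
      _ < ρ/2 + ρ/2 := by rw [h1]; exact add_lt_add hcv hj1
      _ = ρ := by ring
    have hpk : dist (p k) pbar < ρ := by linarith
    -- gradient estimates
    have hg1 := hball' hξ i
    have hg2 := hball' hpk i
    have hdiffnorm : ‖gradient (f i) (p k + c • v k) - gradient (f i) (p k)‖
        < 2*δ/(C+1) := by
      calc ‖gradient (f i) (p k + c • v k) - gradient (f i) (p k)‖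
          ≤ ‖gradient (f i) (p k + c • v k) - gradient (f i) pbar‖
            + ‖gradient (f i) pbar - gradient (f i) (p k)‖ := norm_sub_le_norm_sub_add_norm_sub _ _ _
      _ < δ/(C+1) + δ/(C+1) := by
          rw [norm_sub_rev (gradient (f i) pbar)]
          exact add_lt_add hg1 hg2
      _ = 2*δ/(C+1) := by ring
    have hdiff : |(inner ℝ (gradient (f i) (p k + c • v k)
        - gradient (f i) (p k)) (v k) : ℝ)| ≤ 2*δ := by
      calc |(inner ℝ (gradient (f i) (p k + c • v k) - gradient (f i) (p k)) (v k) : ℝ)|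
          ≤ ‖gradient (f i) (p k + c • v k) - gradient (f i) (p k)‖ * ‖v k‖ :=
            abs_real_inner_le_norm _ _
      _ ≤ (2*δ/(C+1)) * (C+1) := by
          have hvk : ‖v k‖ ≤ C + 1 := by rw [hkdef]; linarith [hCψ j]
          exact mul_le_mul hdiffnorm.le hvk (norm_nonneg _) (by positivity)
      _ = 2*δ := by field_simp
    have hexp : (inner ℝ (gradient (f i) (p k + c • v k)) (v k) : ℝ)
        = (inner ℝ (gradient (f i) (p k + c • v k) - gradient (f i) (p k)) (v k) : ℝ)
          + (inner ℝ (gradient (f i) (p k)) (v k) : ℝ) := by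
      rw [inner_sub_left]
      ring
    have hsl := hsup_le k i
    have hvk2 : ‖vbar‖^2/2 ≤ ‖v k‖^2 := hj4
    have habs := abs_le.1 hdiff
    nlinarith [habs.1, habs.2]
  -- Pareto criticality of pbar
  have hcrit' : ¬ ∃ w, ∀ i, (inner ℝ (gradient (f i) pbar) w : ℝ) < 0 := by
    rintro ⟨w, hw⟩
    obtain ⟨imax, himax⟩ := Finite.exists_max (fun i => (inner ℝ (gradient (f i) pbar) w : ℝ))
    obtain ⟨c, hcpos, hcle⟩ : ∃ c : ℝ, 0 < c ∧
        ∀ i, (inner ℝ (gradient (f i) pbar) w : ℝ) ≤ -c :=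
      ⟨-(inner ℝ (gradient (f imax) pbar) w : ℝ), by linarith [hw imax],
        fun i => by linarith [himax i]⟩
    have hev : ∀ᶠ j in atTop, ∀ i, (inner ℝ (gradient (f i) (p (ψ j))) w : ℝ) ≤ -c/2 := by
      rw [eventually_all]
      intro i
      have hti : Tendsto (fun j => (inner ℝ (gradient (f i) (p (ψ j))) w : ℝ)) atTop
          (nhds ((inner ℝ (gradient (f i) pbar) w : ℝ))) :=
        Filter.Tendsto.inner (𝕜 := ℝ) (((hgcont i).tendsto pbar).comp hpψ) tendsto_const_nhds
      have hlt : (inner ℝ (gradient (f i) pbar) w : ℝ) < -c/2 := by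
        have := hcle i
        linarith
      exact hti.eventually (eventually_le_nhds hlt)
    have hLHS : Tendsto (fun j => (inner ℝ (gradient (f i₀) (p (ψ j))) (v (ψ j)) : ℝ))
        atTop (nhds 0) := by
      have h := Filter.Tendsto.inner (𝕜 := ℝ) (((hgcont i₀).tendsto pbar).comp hpψ) hvψ'
      rw [hvbar0] at h
      simpa using h
    obtain ⟨s, hspos, h10⟩ : ∃ s : ℝ, 0 < s ∧ s * (‖w‖^2+1) = c :=
      ⟨c/(‖w‖^2+1), by positivity, by field_simp⟩
    have hkey : ∀ᶠ j in atTop, (inner ℝ (gradient (f i₀) (p (ψ j))) (v (ψ j)) : ℝ)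
        ≤ s*(-c/2) + s^2*‖w‖^2/2 := by
      filter_upwards [hev] with j hj
      have h4 := hv (ψ j) (s • w)
      have h5 : (⨆ i, (inner ℝ (gradient (f i) (p (ψ j))) (s • w) : ℝ)) ≤ s * (-c/2) := by
        apply ciSup_le
        intro i
        rw [real_inner_smul_right]
        exact mul_le_mul_of_nonneg_left (hj i) hspos.le
      have h6 := le_ciSup (hbdd (p (ψ j)) (v (ψ j))) i₀
      have h7 : ‖s • w‖^2 = s^2*‖w‖^2 := by
        rw [norm_smul]
        simp [mul_pow, sq_abs]
      rw [h7] at h4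
      have h8 : 0 ≤ ‖v (ψ j)‖^2/2 := by positivity
      linarith
    have hfin : (0:ℝ) ≤ s*(-c/2) + s^2*‖w‖^2/2 := le_of_tendsto hLHS hkey
    have h9 : c ≤ s * ‖w‖^2 := by nlinarith [hfin, hspos, sq_nonneg s]
    nlinarith [h9, h10, hspos]
  -- pbar is dominated by the whole sequence
  have hpbarU : ∀ k i, f i pbar ≤ f i (p k) := by
    intro k i
    have hfc : Tendsto (fun j => f i (p (ψ j))) atTop (nhds (f i pbar)) :=
      ((hf i).continuous.tendsto pbar).comp hpψ
    exact SDAux.le_of_antitone_subseq (hfanti i) hψ hfc k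
  -- full convergence
  refine ⟨pbar, ?_, hcrit'⟩
  have ha0 : ∀ k, (0:ℝ) ≤ ‖p k - pbar‖^2 := fun k => by positivity
  have haψ : Tendsto ((fun k => ‖p k - pbar‖^2) ∘ ψ) atTop (nhds 0) := by
    have h1 : Tendsto (fun j => p (ψ j) - pbar) atTop (nhds 0) := by
      have := hpψ.sub (tendsto_const_nhds (x := pbar))
      simpa using this
    have h2 := (h1.norm.pow 2)
    simpa [Function.comp_def] using h2
  have hfull := SDAux.fejer_tendsto ha0 hε0 hεsum (hfejer pbar hpbarU) hψ haψ
  rw [tendsto_iff_dist_tendsto_zero]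
  have hd : ∀ k, dist (p k) pbar = Real.sqrt (‖p k - pbar‖^2) := by
    intro k
    rw [dist_eq_norm, Real.sqrt_sq (norm_nonneg _)]
  have hs : Tendsto (fun k => Real.sqrt (‖p k - pbar‖^2)) atTop (nhds (Real.sqrt 0)) :=
    (Real.continuous_sqrt.tendsto 0).comp hfull
  rw [Real.sqrt_zero] at hs
  simpa only [hd] using hs
end
end
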